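/- arXiv:2106.11630 — 6 statements merged into one kernel-verified Lean document; each statement's English description precedes it below -/
import Mathlib

section
/- Let S be a set of nonnegative integers containing 0 and 1, and let a = (a₁,…,a_k) with a₁ ≤ ⋯ ≤ a_k be a vector of positive integers such that V_S(a) \ {0} equals the set of all integers ≥ n. Then every integer v with n ≤ v ≤ 2n−1 occurs as some component a_j of a; in particular a₁ = n and (n, n+1, …, 2n−1) is a subsequence of a. -/
/-- If V'_S(a) = T(n) with a sorted, then a₁ = n and (n, n+1, …, 2n−1) is a
subsequence of a; in particular every v with n ≤ v ≤ 2n−1 occurs as a component. -/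
theorem stmt_1 (S : Set ℕ) (h0 : 0 ∈ S) (h1 : 1 ∈ S) (n k : ℕ) (hk : 0 < k)
    (a : Fin k → ℕ) (hpos : ∀ i, 0 < a i) (hmono : Monotone a)
    (huniv : {g : ℕ | g ≠ 0 ∧ ∃ s : Fin k → ℕ, (∀ i, s i ∈ S) ∧ g = ∑ i, a i * s i}
      = {g : ℕ | n ≤ g}) :
    a ⟨0, hk⟩ = n ∧ (∀ v, n ≤ v → v ≤ 2 * n - 1 → ∃ j, a j = v) ∧
      (((List.range n).map (n + ·) : Multiset ℕ) ≤ Multiset.map a Finset.univ.val) := by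
  have hn : 0 < n := by
    rcases Nat.eq_zero_or_pos n with h | h
    · exfalso
      have h02 : (0:ℕ) ∈ {g : ℕ | g ≠ 0 ∧ ∃ s : Fin k → ℕ, (∀ i, s i ∈ S) ∧
          g = ∑ i, a i * s i} := by
        rw [huniv]; simp [h]
      exact h02.1 rfl
    · exact h
  have hge : ∀ j, n ≤ a j := by
    intro j
    have hmem : a j ∈ {g : ℕ | g ≠ 0 ∧ ∃ s : Fin k → ℕ, (∀ i, s i ∈ S) ∧
        g = ∑ i, a i * s i} := by
      refine ⟨(hpos j).ne', fun i => if i = j then 1 else 0, fun i => ?_, ?_⟩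
      · by_cases h : i = j <;> simp [h, h0, h1]
      · simp [mul_ite, mul_one, mul_zero]
    rw [huniv] at hmem
    exact hmem
  have hocc : ∀ v, n ≤ v → v ≤ 2 * n - 1 → ∃ j, a j = v := by
    intro v hv1 hv2
    have hv : v ∈ {g : ℕ | g ≠ 0 ∧ ∃ s : Fin k → ℕ, (∀ i, s i ∈ S) ∧
        g = ∑ i, a i * s i} := by rw [huniv]; exact hv1
    obtain ⟨hv0, s, hs, hsum⟩ := hv
    set F := Finset.univ.filter (fun i => s i ≠ 0) with hF
    have hsum' : v = ∑ i ∈ F, a i * s i := by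
      rw [hsum]
      symm
      apply Finset.sum_subset (Finset.filter_subset _ _)
      intro i _ hi
      simp only [hF, Finset.mem_filter, Finset.mem_univ, true_and, not_not] at hi
      simp [hi]
    have hterm : ∀ i ∈ F, n ≤ a i * s i := by
      intro i hi
      have hi' := Finset.mem_filter.mp hi
      calc n ≤ a i := hge i
        _ ≤ a i * s i := Nat.le_mul_of_pos_right _ (Nat.pos_of_ne_zero hi'.2)
    have hFne : F.Nonempty := by
      by_contra h
      rw [Finset.not_nonempty_iff_eq_empty] at h
      rw [h, Finset.sum_empty] at hsum'
      exact hv0 hsum'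
    have hcard : F.card = 1 := by
      by_contra h
      have h2 : 2 ≤ F.card := by
        have := Finset.card_pos.mpr hFne
        omega
      have h2n : 2 * n ≤ v := by
        calc 2 * n ≤ F.card * n := Nat.mul_le_mul_right n h2
          _ = ∑ _i ∈ F, n := by rw [Finset.sum_const, smul_eq_mul]
          _ ≤ ∑ i ∈ F, a i * s i := Finset.sum_le_sum hterm
          _ = v := hsum'.symm
      omega
    obtain ⟨j, hj⟩ := Finset.card_eq_one.mp hcard
    rw [hj, Finset.sum_singleton] at hsum'
    have hsj : s j ≠ 0 := by
      have := Finset.mem_filter.mp (hj ▸ Finset.mem_singleton_self j)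
      exact this.2
    have hsj1 : s j = 1 := by
      by_contra h
      have h2 : 2 ≤ s j := by omega
      have h2n : 2 * n ≤ v := by
        calc 2 * n ≤ 2 * a j := Nat.mul_le_mul_left 2 (hge j)
          _ = a j * 2 := Nat.mul_comm _ _
          _ ≤ a j * s j := Nat.mul_le_mul_left _ h2
          _ = v := hsum'.symm
      omega
    exact ⟨j, by rw [hsum', hsj1, mul_one]⟩
  refine ⟨?_, hocc, ?_⟩
  · obtain ⟨j, hj⟩ := hocc n le_rfl (by omega)
    have hle : a ⟨0, hk⟩ ≤ a j := hmono (by simp [Fin.le_def])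
    exact le_antisymm (hj ▸ hle) (hge _)
  · rw [Multiset.le_iff_count]
    intro x
    by_cases hx : x ∈ (List.range n).map (n + ·)
    · obtain ⟨m, hm, hmx⟩ := List.mem_map.mp hx
      rw [List.mem_range] at hm
      obtain ⟨j, hj⟩ := hocc x (by omega) (by omega)
      have hmem : x ∈ Multiset.map a Finset.univ.val :=
        Multiset.mem_map.mpr ⟨j, Finset.mem_univ j, hj⟩
      have h1c : Multiset.count x ((List.range n).map (n + ·) : Multiset ℕ) ≤ 1 := by
        rw [Multiset.coe_count]
        refine List.nodup_iff_count_le_one.mp ?_ x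
        exact (List.nodup_range (n := n)).map (fun a b h => by omega)
      have h2c := Multiset.one_le_count_iff_mem.mpr hmem
      omega
    · rw [Multiset.count_eq_zero_of_notMem (by simpa using hx)]
      exact Nat.zero_le _
end

section
/- Let S be a set of nonnegative integers containing 0 and 1 but not containing 2, and let a = (a₁,…,a_k) with a₁ ≤ ⋯ ≤ a_k be a vector of positive integers with V'_S(a) = T(n). Then either (n, n, n+1, …, 2n−1) or (n, n+1, …, 2n−1, 2n) is a subsequence of a. -/
/-- If 2 ∉ S and V'_S(a) = T(n), then (n,n,n+1,…,2n−1) or (n,n+1,…,2n) is a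
subsequence (sub-multiset) of a. -/
theorem stmt_2 (S : Set ℕ) (h0 : 0 ∈ S) (h1 : 1 ∈ S) (h2 : 2 ∉ S) (n k : ℕ)
    (a : Fin k → ℕ) (hpos : ∀ i, 0 < a i) (hmono : Monotone a)
    (huniv : {g : ℕ | g ≠ 0 ∧ ∃ s : Fin k → ℕ, (∀ i, s i ∈ S) ∧ g = ∑ i, a i * s i}
      = {g : ℕ | n ≤ g}) :
    ((n :: (List.range n).map (n + ·) : Multiset ℕ) ≤ Multiset.map a Finset.univ.val) ∨
      (((List.range (n + 1)).map (n + ·) : Multiset ℕ) ≤ Multiset.map a Finset.univ.val) := by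
  -- n is positive
  have hn : 0 < n := by
    rcases Nat.eq_zero_or_pos n with h | h
    · exfalso
      have h0m : (0:ℕ) ∈ {g : ℕ | n ≤ g} := by simp [h]
      rw [← huniv] at h0m
      exact h0m.1 rfl
    · exact h
  -- each a i is at least n
  have hge : ∀ i, n ≤ a i := by
    intro i
    have hmem : a i ∈ {g : ℕ | n ≤ g} := by
      rw [← huniv]
      refine ⟨(hpos i).ne', fun j => if j = i then 1 else 0, ?_, ?_⟩
      · intro j; dsimp only; split
        · exact h1
        · exact h0
      · simp [mul_ite]
    exact hmem
  -- membership below 3n forces {0,1}-coefficients, hence a subset sum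
  have key : ∀ m : ℕ, n ≤ m → m < 3 * n → ∃ F : Finset (Fin k), m = ∑ i ∈ F, a i := by
    intro m hm hm3
    have hmem : m ∈ {g : ℕ | g ≠ 0 ∧ ∃ s : Fin k → ℕ, (∀ i, s i ∈ S) ∧
        g = ∑ i, a i * s i} := by
      rw [huniv]; exact hm
    obtain ⟨-, s, hsS, hsum⟩ := hmem
    have hs1 : ∀ i, s i ≤ 1 := by
      intro i
      by_contra hgt
      push_neg at hgt
      have h3 : 3 ≤ s i := by
        rcases Nat.lt_or_ge (s i) 3 with h' | h'
        · exfalso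
          have : s i = 2 := by omega
          exact h2 (this ▸ hsS i)
        · exact h'
      have hcontra : 3 * n ≤ m := by
        calc 3 * n ≤ a i * s i := by
              have := hge i; nlinarith
          _ ≤ ∑ j, a j * s j :=
              Finset.single_le_sum (f := fun j => a j * s j)
                (fun j _ => Nat.zero_le _) (Finset.mem_univ i)
          _ = m := hsum.symm
      omega
    refine ⟨Finset.univ.filter (fun i => s i = 1), ?_⟩
    have heq : ∑ i ∈ Finset.univ.filter (fun i => s i = 1), a i * s i
        = ∑ i, a i * s i := by
      apply Finset.sum_filter_of_ne
      intro i _ hne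
      have := hs1 i
      rcases Nat.lt_or_ge (s i) 1 with h' | h'
      · exfalso; apply hne; have : s i = 0 := by omega
        rw [this, mul_zero]
      · omega
    rw [hsum, ← heq]
    apply Finset.sum_congr rfl
    intro i hi
    rw [Finset.mem_filter] at hi
    rw [hi.2, mul_one]
  -- subset sums in [n, 2n) are single elements
  have exists_one : ∀ m : ℕ, n ≤ m → m < 2 * n → ∃ i, a i = m := by
    intro m hm hm2
    obtain ⟨F, hF⟩ := key m hm (by omega)
    have hcard : F.card * n ≤ m := by
      have h := Finset.card_nsmul_le_sum F a n (fun i _ => hge i)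
      rw [smul_eq_mul] at h
      exact le_trans h (le_of_eq hF.symm)
    have hne : F.Nonempty := by
      rcases F.eq_empty_or_nonempty with h | h
      · exfalso; rw [h, Finset.sum_empty] at hF; omega
      · exact h
    have hc1 : F.card = 1 := by
      have hpos' := Finset.card_pos.mpr hne
      by_contra hc
      have h2le : 2 ≤ F.card := by omega
      have : 2 * n ≤ F.card * n := Nat.mul_le_mul_right n h2le
      omega
    obtain ⟨i, hi⟩ := Finset.card_eq_one.mp hc1
    exact ⟨i, by rw [hF, hi, Finset.sum_singleton]⟩
  -- the value 2n : either one element 2n or two elements equal to n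
  have h2n : (∃ i, a i = 2 * n) ∨ (∃ i j, i ≠ j ∧ a i = n ∧ a j = n) := by
    obtain ⟨F, hF⟩ := key (2 * n) (by omega) (by omega)
    have hcard : F.card * n ≤ 2 * n := by
      have h := Finset.card_nsmul_le_sum F a n (fun i _ => hge i)
      rw [smul_eq_mul] at h
      exact le_trans h (le_of_eq hF.symm)
    have hne : F.Nonempty := by
      rcases F.eq_empty_or_nonempty with h | h
      · exfalso; rw [h, Finset.sum_empty] at hF; omega
      · exact h
    have hc12 : F.card = 1 ∨ F.card = 2 := by
      have hpos' := Finset.card_pos.mpr hne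
      by_contra hc
      push_neg at hc
      have h3le : 3 ≤ F.card := by omega
      have : 3 * n ≤ F.card * n := Nat.mul_le_mul_right n h3le
      omega
    rcases hc12 with h | h
    · obtain ⟨i, hi⟩ := Finset.card_eq_one.mp h
      left
      exact ⟨i, by rw [hF, hi, Finset.sum_singleton]⟩
    · obtain ⟨i, j, hij, hFij⟩ := Finset.card_eq_two.mp h
      right
      have hsum : a i + a j = 2 * n := by
        rw [hF, hFij, Finset.sum_pair hij]
      have hi := hge i
      have hj := hge j
      exact ⟨i, j, hij, by omega, by omega⟩
  -- counting helper
  have hcount : ∀ (x : ℕ) (F : Finset (Fin k)), (∀ i ∈ F, a i = x) →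
      F.card ≤ Multiset.count x (Multiset.map a Finset.univ.val) := by
    intro x F hF
    rw [Multiset.count_map]
    have hle : F.val ≤ Multiset.filter (fun i => x = a i) Finset.univ.val :=
      Multiset.le_filter.mpr ⟨Finset.val_le_iff.mpr (Finset.subset_univ F),
        fun i hi => (hF i hi).symm⟩
    exact Multiset.card_le_card hle
  -- the nodup list of values n, n+1, ..., n+m-1
  have hnodup : ∀ m : ℕ, ((List.range m).map (n + ·) : Multiset ℕ).Nodup := by
    intro m
    rw [Multiset.coe_nodup]
    exact List.nodup_range.map (fun x y h => by omega)
  have hmemL : ∀ m x : ℕ, x ∈ ((List.range m).map (n + ·) : Multiset ℕ) ↔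
      n ≤ x ∧ x < n + m := by
    intro m x
    simp only [Multiset.mem_coe, List.mem_map, List.mem_range]
    constructor
    · rintro ⟨t, ht, rfl⟩; omega
    · rintro ⟨h1', h2'⟩; exact ⟨x - n, by omega, by omega⟩
  rcases h2n with ⟨i2, hi2⟩ | ⟨i, j, hij, hi, hj⟩
  · -- a contains 2n together with n..2n-1 : second alternative
    right
    rw [Multiset.le_iff_count]
    intro x
    by_cases hx : x ∈ ((List.range (n + 1)).map (n + ·) : Multiset ℕ)
    · rw [Multiset.count_eq_one_of_mem (hnodup (n + 1)) hx]
      rw [hmemL] at hx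
      rcases Nat.lt_or_ge x (2 * n) with hlt | hge2
      · obtain ⟨i, hi⟩ := exists_one x hx.1 hlt
        have := hcount x {i} (by simpa using hi)
        simpa using this
      · have hx2 : x = 2 * n := by omega
        have := hcount x {i2} (by simp [hi2, hx2])
        simpa using this
    · rw [Multiset.count_eq_zero_of_notMem hx]
      exact Nat.zero_le _
  · -- a contains n twice together with n+1..2n-1 : first alternative
    left
    rw [Multiset.le_iff_count]
    intro x
    have hcons : (↑(n :: (List.range n).map (n + ·)) : Multiset ℕ)
        = n ::ₘ ((List.range n).map (n + ·) : Multiset ℕ) := rfl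
    rw [hcons]
    by_cases hxn : x = n
    · rw [hxn]
      have hmem : n ∈ ((List.range n).map (n + ·) : Multiset ℕ) :=
        (hmemL n n).mpr ⟨le_rfl, by omega⟩
      rw [Multiset.count_cons_self,
        Multiset.count_eq_one_of_mem (hnodup n) hmem]
      have := hcount n {i, j} (by
        intro l hl
        rcases Finset.mem_insert.mp hl with rfl | hl
        · exact hi
        · rw [Finset.mem_singleton.mp hl]; exact hj)
      rwa [Finset.card_pair hij] at this
    · rw [Multiset.count_cons_of_ne hxn]
      by_cases hx : x ∈ ((List.range n).map (n + ·) : Multiset ℕ)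
      · rw [Multiset.count_eq_one_of_mem (hnodup n) hx]
        rw [hmemL] at hx
        obtain ⟨l, hl⟩ := exists_one x hx.1 (by omega)
        have := hcount x {l} (by simpa using hl)
        simpa using this
      · rw [Multiset.count_eq_zero_of_notMem hx]
        exact Nat.zero_le _
end

section
/- Let S be a set of nonnegative integers containing 0 and 1, let e₁ ≥ 1 and e₂, e₃ ≥ 0, and suppose V_S(1^{e₁} 2^{e₂} 3^{e₃}) = ℕ₀ (i.e., every nonnegative integer is a sum of e₁ elements of S, plus twice e₂ elements of S, plus three times e₃ elements of S). Then for any integer n ≥ 2e₃ + 3, every integer m ≥ n can be written as a₁s₁ + ⋯ where the coefficient vector is n repeated e₁ times, followed by n+1, n+2, …, 2n−1 each once, followed by 2n repeated e₂ times, with all s_i ∈ S. That is, the vector n^{e₁} (n+1)¹ ⋯ (2n−1)¹ (2n)^{e₂} is tight T(n)-universal with respect to S. -/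
private lemma sum_ind_aux (n a c : ℕ) (h1 : 1 ≤ a) (h2 : a ≤ n - 1) :
    ∑ k : Fin (n - 1), (n + 1 + (k : ℕ)) * (if (k : ℕ) + 1 = a then c else 0)
      = (n + a) * c := by
  have hn2 : 2 ≤ n := by omega
  rw [Finset.sum_eq_single (⟨a - 1, by omega⟩ : Fin (n - 1))]
  · rw [if_pos (by simp; omega)]
    have h3 : n + 1 + ((⟨a - 1, by omega⟩ : Fin (n - 1)) : ℕ) = n + a := by simp; omega
    rw [h3]
  · intro k _ hk
    rw [if_neg, mul_zero]
    intro h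
    exact hk (Fin.ext (by simp; omega))
  · intro h; exact absurd (Finset.mem_univ _) h

/-- If V_S(1^{e₁} 2^{e₂} 3^{e₃}) = ℕ₀, then for n ≥ 2e₃+3 the vector
n^{e₁} (n+1) ⋯ (2n−1) (2n)^{e₂} is tight T(n)-universal with respect to S. -/
theorem stmt_3 (S : Set ℕ) (h0 : 0 ∈ S) (h1 : 1 ∈ S) (e₁ e₂ e₃ : ℕ) (he₁ : 1 ≤ e₁)
    (huniv : ∀ N : ℕ, ∃ s : Fin e₁ → ℕ, ∃ t : Fin e₂ → ℕ, ∃ r : Fin e₃ → ℕ,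
      (∀ i, s i ∈ S) ∧ (∀ i, t i ∈ S) ∧ (∀ i, r i ∈ S) ∧
      N = ∑ i, s i + 2 * ∑ i, t i + 3 * ∑ i, r i)
    (n : ℕ) (hn : 2 * e₃ + 3 ≤ n) :
    {g : ℕ | g ≠ 0 ∧ ∃ s : Fin e₁ → ℕ, ∃ u : Fin (n - 1) → ℕ, ∃ t : Fin e₂ → ℕ,
        (∀ i, s i ∈ S) ∧ (∀ i, u i ∈ S) ∧ (∀ i, t i ∈ S) ∧
        g = n * ∑ i, s i + (∑ i : Fin (n - 1), (n + 1 + (i : ℕ)) * u i) + 2 * n * ∑ i, t i}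
      = {g : ℕ | n ≤ g} := by
  ext g
  simp only [Set.mem_setOf_eq]
  constructor
  · rintro ⟨hg0, s, u, t, hs, hu, ht, hg⟩
    by_cases hA : ∑ i, s i = 0
    · by_cases hB : ∑ i, t i = 0
      · rw [hA, hB, mul_zero, mul_zero, zero_add, add_zero] at hg
        by_cases hU : ∀ i, u i = 0
        · exfalso; apply hg0
          rw [hg, Finset.sum_eq_zero]
          intro i _; rw [hU i, mul_zero]
        · push_neg at hU
          obtain ⟨i, hi⟩ := hU
          have h1' : (n + 1 + (i : ℕ)) * u i ≤ ∑ k : Fin (n - 1), (n + 1 + (k : ℕ)) * u k :=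
            Finset.single_le_sum (f := fun k : Fin (n - 1) => (n + 1 + (k : ℕ)) * u k)
              (fun _ _ => Nat.zero_le _) (Finset.mem_univ i)
          have h2' : n + 1 + (i : ℕ) ≤ (n + 1 + (i : ℕ)) * u i :=
            Nat.le_mul_of_pos_right _ (Nat.pos_of_ne_zero hi)
          exact le_trans (by omega : n ≤ n + 1 + (i : ℕ))
            (le_trans h2' (le_trans h1' (le_of_eq hg.symm)))
      · have h2' : 2 * n * 1 ≤ 2 * n * ∑ i, t i :=
          Nat.mul_le_mul_left _ (Nat.pos_of_ne_zero hB)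
        have h3' : 2 * n * ∑ i, t i ≤ g := by
          rw [hg]; exact Nat.le_add_left _ _
        exact le_trans (le_trans (by omega : n ≤ 2 * n * 1) h2') h3'
    · have h2' : n * 1 ≤ n * ∑ i, s i :=
        Nat.mul_le_mul_left _ (Nat.pos_of_ne_zero hA)
      have h3' : n * ∑ i, s i ≤ g := by
        rw [hg]
        exact le_trans (Nat.le_add_right _ _) (Nat.le_add_right _ _)
      exact le_trans (le_trans (by omega : n ≤ n * 1) h2') h3'
  · intro hm
    set j := g % n with hjdef
    have hjn : j < n := Nat.mod_lt _ (by omega)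
    obtain ⟨s, t, r, hs, ht, hr, hNeq⟩ := huniv (if j = 0 then g / n else g / n - 1)
    have hdm := Nat.div_add_mod g n
    have hgN : g = n * (if j = 0 then g / n else g / n - 1)
        + (if j = 0 then 0 else n + j) := by
      rcases eq_or_ne j 0 with h | h
      · simp only [if_pos h]
        omega
      · have hq1 : 1 ≤ g / n := (Nat.one_le_div_iff (by omega)).mpr hm
        have h3 : g / n - 1 + 1 = g / n := by omega
        have h2 : n * (g / n) = n * (g / n - 1) + n := by
          calc n * (g / n) = n * (g / n - 1 + 1) := by rw [h3]
          _ = n * (g / n - 1) + n := by ring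
        simp only [if_neg h]
        omega
    obtain ⟨f, hf1, hf2, hfinj, hfj⟩ :
        ∃ f : Fin e₃ → ℕ, (∀ i, 1 ≤ f i) ∧ (∀ i, f i ≤ e₃ + 1) ∧
          (∀ i i' : Fin e₃, f i = f i' → i = i') ∧
          (∀ i, j ≠ 0 → f i ≠ j ∧ n - f i ≠ j) := by
      refine ⟨fun i => if (i : ℕ) + 1 <
          (if 1 ≤ j ∧ j ≤ e₃ + 1 then j else if n ≤ j + e₃ + 1 then n - j else e₃ + 2)
          then (i : ℕ) + 1 else (i : ℕ) + 2, ?_, ?_, ?_, ?_⟩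
      · intro i; dsimp only; split_ifs <;> omega
      · intro i; have hi := i.isLt; dsimp only; split_ifs <;> omega
      · intro i i' h
        have hi := i.isLt; have hi' := i'.isLt
        apply Fin.ext
        dsimp only at h
        split_ifs at h <;> omega
      · intro i hj0
        have hi := i.isLt
        dsimp only
        split_ifs <;> constructor <;> omega
    refine ⟨by omega, s,
      fun k => (if (k : ℕ) + 1 = j then 1 else 0)
        + ∑ i : Fin e₃, ((if (k : ℕ) + 1 = f i then r i else 0)
            + (if (k : ℕ) + 1 = n - f i then r i else 0)), t, hs, ?_, ht, ?_⟩
    · intro k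
      dsimp only
      by_cases hkj : (k : ℕ) + 1 = j
      · have hz : (∑ i : Fin e₃, ((if (k : ℕ) + 1 = f i then r i else 0)
            + (if (k : ℕ) + 1 = n - f i then r i else 0))) = 0 := by
          apply Finset.sum_eq_zero
          intro i _
          have h3 := hfj i (by omega)
          rw [if_neg (by omega), if_neg (by omega)]
          rfl
        rw [if_pos hkj, hz]
        exact h1
      · rw [if_neg hkj, zero_add]
        by_cases hk1 : ∃ i, (k : ℕ) + 1 = f i
        · obtain ⟨i₀, hi₀⟩ := hk1
          rw [Finset.sum_eq_single i₀]
          · rw [if_pos hi₀, if_neg (by have := hf1 i₀; have := hf2 i₀; omega), add_zero]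
            exact hr i₀
          · intro i _ hii
            rw [if_neg (fun h => hii (hfinj i i₀ (by omega))),
              if_neg (by have := hf2 i; have := hf2 i₀; omega), add_zero]
          · intro h; exact absurd (Finset.mem_univ _) h
        · push_neg at hk1
          by_cases hk2 : ∃ i, (k : ℕ) + 1 = n - f i
          · obtain ⟨i₀, hi₀⟩ := hk2
            rw [Finset.sum_eq_single i₀]
            · rw [if_neg (hk1 i₀), if_pos hi₀, zero_add]
              exact hr i₀
            · intro i _ hii
              rw [if_neg (hk1 i), if_neg (fun h => hii (hfinj i i₀
                (by have := hf2 i; have := hf2 i₀; have := hf1 i; have := hf1 i₀; omega))),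
                add_zero]
            · intro h; exact absurd (Finset.mem_univ _) h
          · push_neg at hk2
            rw [Finset.sum_eq_zero (fun i _ => by rw [if_neg (hk1 i), if_neg (hk2 i), add_zero])]
            exact h0
    · have hW : ∑ k : Fin (n - 1), (n + 1 + (k : ℕ)) *
          ((if (k : ℕ) + 1 = j then 1 else 0)
            + ∑ i : Fin e₃, ((if (k : ℕ) + 1 = f i then r i else 0)
                + (if (k : ℕ) + 1 = n - f i then r i else 0)))
          = (if j = 0 then 0 else n + j) + 3 * n * ∑ i, r i := by
        calc ∑ k : Fin (n - 1), (n + 1 + (k : ℕ)) *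
              ((if (k : ℕ) + 1 = j then 1 else 0)
                + ∑ i : Fin e₃, ((if (k : ℕ) + 1 = f i then r i else 0)
                    + (if (k : ℕ) + 1 = n - f i then r i else 0)))
            = ∑ k : Fin (n - 1), ((n + 1 + (k : ℕ)) * (if (k : ℕ) + 1 = j then 1 else 0)
                + ∑ i : Fin e₃, ((n + 1 + (k : ℕ)) * (if (k : ℕ) + 1 = f i then r i else 0)
                    + (n + 1 + (k : ℕ)) * (if (k : ℕ) + 1 = n - f i then r i else 0))) := by
              apply Finset.sum_congr rfl
              intro k _
              rw [mul_add, Finset.mul_sum]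
              congr 1
              apply Finset.sum_congr rfl
              intro i _
              rw [mul_add]
          _ = (∑ k : Fin (n - 1), (n + 1 + (k : ℕ)) * (if (k : ℕ) + 1 = j then 1 else 0))
                + ∑ k : Fin (n - 1), ∑ i : Fin e₃,
                    ((n + 1 + (k : ℕ)) * (if (k : ℕ) + 1 = f i then r i else 0)
                      + (n + 1 + (k : ℕ)) * (if (k : ℕ) + 1 = n - f i then r i else 0)) :=
              Finset.sum_add_distrib
          _ = (if j = 0 then 0 else n + j) + 3 * n * ∑ i, r i := by
              congr 1
              · rcases eq_or_ne j 0 with h | h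
                · rw [if_pos h]
                  apply Finset.sum_eq_zero
                  intro k _
                  rw [if_neg (by omega), mul_zero]
                · rw [if_neg h, sum_ind_aux n j 1 (by omega) (by omega), mul_one]
              · rw [Finset.sum_comm]
                rw [Finset.mul_sum]
                apply Finset.sum_congr rfl
                intro i _
                rw [Finset.sum_add_distrib,
                  sum_ind_aux n (f i) (r i) (hf1 i) (by have := hf2 i; omega),
                  sum_ind_aux n (n - f i) (r i) (by have := hf2 i; omega)
                    (by have := hf1 i; omega),
                  ← add_mul]
                have h4 : n + f i + (n + (n - f i)) = 3 * n := by
                  have := hf2 i; omega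
                rw [h4]
      rw [hW, hgN, hNeq]
      ring
end

section
/- The ternary triangular form T(x) + T(y) + 3T(z) (x, y, z ∈ ℕ₀) represents every nonnegative integer not congruent to 2 modulo 3. -/
set_option maxHeartbeats 1000000

open scoped NumberTheorySymbols

namespace Stmt17


/-- ternary quadratic form with Gram matrix [[a,b,c],[b,s,t],[c,t,u]] -/
def Qf (a b c s t u x y z : ℤ) : ℤ :=
  a*x^2 + s*y^2 + u*z^2 + 2*b*x*y + 2*c*x*z + 2*t*y*z

/-- determinant of the Gram matrix -/
def Df (a b c s t u : ℤ) : ℤ := a*s*u + 2*b*c*t - a*t^2 - b^2*u - c^2*s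

/-- positive definite, determinant 3, represents n -/
def Good (n a b c s t u : ℤ) : Prop :=
  (∀ x y z : ℤ, ¬(x = 0 ∧ y = 0 ∧ z = 0) → 1 ≤ Qf a b c s t u x y z) ∧
  Df a b c s t u = 3 ∧ ∃ x y z : ℤ, Qf a b c s t u x y z = n

lemma good_trans {n a b c s t u a' b' c' s' t' u' : ℤ}
    (m11 m12 m13 m21 m22 m23 m31 m32 m33 w11 w12 w13 w21 w22 w23 w31 w32 w33 : ℤ)
    (hcoef : ∀ x y z : ℤ, Qf a' b' c' s' t' u' x y z =
      Qf a b c s t u (m11*x+m12*y+m13*z) (m21*x+m22*y+m23*z) (m31*x+m32*y+m33*z))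
    (hdet : Df a' b' c' s' t' u' = Df a b c s t u)
    (hWM : ∀ x y z : ℤ,
      w11*(m11*x+m12*y+m13*z) + w12*(m21*x+m22*y+m23*z) + w13*(m31*x+m32*y+m33*z) = x ∧
      w21*(m11*x+m12*y+m13*z) + w22*(m21*x+m22*y+m23*z) + w23*(m31*x+m32*y+m33*z) = y ∧
      w31*(m11*x+m12*y+m13*z) + w32*(m21*x+m22*y+m23*z) + w33*(m31*x+m32*y+m33*z) = z)
    (hMW : ∀ x y z : ℤ,
      m11*(w11*x+w12*y+w13*z) + m12*(w21*x+w22*y+w23*z) + m13*(w31*x+w32*y+w33*z) = x ∧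
      m21*(w11*x+w12*y+w13*z) + m22*(w21*x+w22*y+w23*z) + m23*(w31*x+w32*y+w33*z) = y ∧
      m31*(w11*x+w12*y+w13*z) + m32*(w21*x+w22*y+w23*z) + m33*(w31*x+w32*y+w33*z) = z)
    (hg : Good n a b c s t u) : Good n a' b' c' s' t' u' := by
  obtain ⟨hpos, hD, x0, y0, z0, hrep⟩ := hg
  refine ⟨?_, by rw [hdet, hD], ?_⟩
  · intro x y z hne
    rw [hcoef]
    apply hpos
    rintro ⟨h1, h2, h3⟩
    obtain ⟨e1, e2, e3⟩ := hWM x y z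
    rw [h1, h2, h3] at e1 e2 e3
    exact hne ⟨by linarith, by linarith, by linarith⟩
  · refine ⟨w11*x0+w12*y0+w13*z0, w21*x0+w22*y0+w23*z0, w31*x0+w32*y0+w33*z0, ?_⟩
    rw [hcoef]
    obtain ⟨e1, e2, e3⟩ := hMW x0 y0 z0
    rw [e1, e2, e3]
    exact hrep

lemma good_swap12 {n a b c s t u : ℤ} (hg : Good n a b c s t u) :
    Good n s b t a c u :=
  good_trans 0 1 0 1 0 0 0 0 1 0 1 0 1 0 0 0 0 1
    (by intros; simp only [Qf]; ring) (by simp only [Df]; ring)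
    (by intros; exact ⟨by ring, by ring, by ring⟩)
    (by intros; exact ⟨by ring, by ring, by ring⟩) hg

lemma good_swap23 {n a b c s t u : ℤ} (hg : Good n a b c s t u) :
    Good n a c b u t s :=
  good_trans 1 0 0 0 0 1 0 1 0 1 0 0 0 0 1 0 1 0
    (by intros; simp only [Qf]; ring) (by simp only [Df]; ring)
    (by intros; exact ⟨by ring, by ring, by ring⟩)
    (by intros; exact ⟨by ring, by ring, by ring⟩) hg

lemma good_shearB {n a b c s t u : ℤ} (k : ℤ) (hg : Good n a b c s t u) :
    Good n a (b+k*a) c (s+2*k*b+k^2*a) (t+k*c) u :=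
  good_trans 1 k 0 0 1 0 0 0 1 1 (-k) 0 0 1 0 0 0 1
    (by intros; simp only [Qf]; ring) (by simp only [Df]; ring)
    (by intros; exact ⟨by ring, by ring, by ring⟩)
    (by intros; exact ⟨by ring, by ring, by ring⟩) hg

lemma good_shearC {n a b c s t u : ℤ} (k : ℤ) (hg : Good n a b c s t u) :
    Good n a b (c+k*a) s (t+k*b) (u+2*k*c+k^2*a) :=
  good_trans 1 0 k 0 1 0 0 0 1 1 0 (-k) 0 1 0 0 0 1
    (by intros; simp only [Qf]; ring) (by simp only [Df]; ring)
    (by intros; exact ⟨by ring, by ring, by ring⟩)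
    (by intros; exact ⟨by ring, by ring, by ring⟩) hg

lemma good_shearT {n a b c s t u : ℤ} (k : ℤ) (hg : Good n a b c s t u) :
    Good n a b (c+k*b) s (t+k*s) (u+2*k*t+k^2*s) :=
  good_trans 1 0 0 0 1 k 0 0 1 1 0 0 0 1 (-k) 0 0 1
    (by intros; simp only [Qf]; ring) (by simp only [Df]; ring)
    (by intros; exact ⟨by ring, by ring, by ring⟩)
    (by intros; exact ⟨by ring, by ring, by ring⟩) hg

lemma good_moveE {n a b c s t u : ℤ} (k m : ℤ) (hg : Good n a b c s t u) :
    Good n (a+s*k^2+u*m^2+2*b*k+2*c*m+2*t*k*m) (b+k*s+m*t) (c+m*u+k*t) s t u :=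
  good_trans 1 0 0 k 1 0 m 0 1 1 0 0 (-k) 1 0 (-m) 0 1
    (by intros; simp only [Qf]; ring) (by simp only [Df]; ring)
    (by intros; exact ⟨by ring, by ring, by ring⟩)
    (by intros; exact ⟨by ring, by ring, by ring⟩) hg

lemma diag_pos {n a b c s t u : ℤ} (hg : Good n a b c s t u) :
    1 ≤ a ∧ 1 ≤ s ∧ 1 ≤ u := by
  refine ⟨?_, ?_, ?_⟩
  · have := hg.1 1 0 0 (by simp); simpa [Qf] using this
  · have := hg.1 0 1 0 (by simp); simpa [Qf] using this
  · have := hg.1 0 0 1 (by simp); simpa [Qf] using this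

lemma abs2_le {b B : ℤ} (h : 4*b^2 ≤ B^2) (hB : 0 ≤ B) : |2*b| ≤ B := by
  rw [abs_le]; constructor <;> nlinarith [sq_nonneg (2*b - B), sq_nonneg (2*b + B)]

lemma bct_bound {b c t B1 B2 B3 : ℤ} (h1 : 4*b^2 ≤ B1^2) (h2 : 4*c^2 ≤ B2^2)
    (h3 : 4*t^2 ≤ B3^2) (hB1 : 0 ≤ B1) (hB2 : 0 ≤ B2) (hB3 : 0 ≤ B3) :
    -(B1*B2*B3) ≤ 8*b*c*t ∧ 8*b*c*t ≤ B1*B2*B3 := by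
  have k1 := abs2_le h1 hB1
  have k2 := abs2_le h2 hB2
  have k3 := abs2_le h3 hB3
  have habs : |8*b*c*t| ≤ B1*B2*B3 := by
    have e : |8*b*c*t| = |2*b| * |2*c| * |2*t| := by
      rw [← abs_mul, ← abs_mul]; ring_nf
    rw [e]
    have h4 : |2*b| * |2*c| ≤ B1 * B2 := mul_le_mul k1 k2 (abs_nonneg _) hB1
    exact mul_le_mul h4 k3 (abs_nonneg _) (by positivity)
  exact ⟨neg_le_of_abs_le habs, le_of_abs_le habs⟩

lemma refine_odd {b a : ℤ} (h : 4*b^2 ≤ a^2) (ha : Odd a) (ha0 : 0 ≤ a) :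
    4*b^2 ≤ (a-1)^2 := by
  have k := abs2_le h ha0
  have hne : |2*b| ≠ a := by
    intro he
    have h2 : |2*b| = 2*|b| := by rw [abs_mul]; norm_num
    rw [he] at h2
    exact (Int.not_odd_iff_even.mpr ⟨|b|, by linarith⟩) ha
  have k2 : |2*b| ≤ a - 1 := by omega
  calc 4*b^2 = |2*b|^2 := by rw [sq_abs]; ring
    _ ≤ (a-1)^2 := by nlinarith [abs_nonneg (2*b)]

lemma case_cube {b c t A : ℤ} (hA : 2 ≤ A) (hb : 4*b^2 ≤ A^2) (hc : 4*c^2 ≤ A^2)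
    (ht : 4*t^2 ≤ A^2) (hD : A*A*A + 2*b*c*t - A*t^2 - b^2*A - c^2*A = 3) : False := by
  have hA0 : (0:ℤ) ≤ A := by omega
  rcases Int.even_or_odd A with ⟨m, hm⟩ | hodd
  · have h23 : (3:ℤ) = 2*(m*(A*A - t^2 - b^2 - c^2) + b*c*t) := by
      rw [hm] at hD; rw [hm]; linear_combination -hD
    have h2 : (2:ℤ) ∣ 3 := ⟨_, h23⟩
    norm_num at h2
  · have hb' := refine_odd hb hodd hA0
    have hc' := refine_odd hc hodd hA0
    have ht' := refine_odd ht hodd hA0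
    have hA3 : 3 ≤ A := by rcases hodd with ⟨m, hm⟩; omega
    obtain ⟨hbct', -⟩ := bct_bound hb' hc' ht' (by omega) (by omega) (by omega)
    have e1 : 4*A*t^2 ≤ A*(A-1)^2 := by nlinarith
    have e2 : 4*A*b^2 ≤ A*(A-1)^2 := by nlinarith
    have e3 : 4*A*c^2 ≤ A*(A-1)^2 := by nlinarith
    have idq : 4*A^3 - 3*(A*(A-1)^2) - (A-1)^3 = (3*A-1)^2 := by ring
    have big : (64:ℤ) ≤ (3*A-1)^2 := by nlinarith
    nlinarith [hD, e1, e2, e3, hbct', idq, big]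

lemma case_223 {b c t : ℤ} (hb1 : -1 ≤ b) (hb2 : b ≤ 1) (hc1 : -1 ≤ c) (hc2 : c ≤ 1)
    (ht1 : -1 ≤ t) (ht2 : t ≤ 1)
    (hD : 2*2*3 + 2*b*c*t - 2*t^2 - b^2*3 - c^2*2 = 3)
    (hE : ∀ k m : ℤ, (k = 1 ∨ k = -1) → (m = 1 ∨ m = -1) →
      (2:ℤ) ≤ 2 + 2*k^2 + 3*m^2 + 2*b*k + 2*c*m + 2*t*k*m) : False := by
  interval_cases b <;> interval_cases c <;> interval_cases t <;>
    first
      | (norm_num at hD; done)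
      | (have h := hE 1 1 (Or.inl rfl) (Or.inl rfl); norm_num at h; done)
      | (have h := hE 1 (-1) (Or.inl rfl) (Or.inr rfl); norm_num at h; done)
      | (have h := hE (-1) 1 (Or.inr rfl) (Or.inl rfl); norm_num at h; done)
      | (have h := hE (-1) (-1) (Or.inr rfl) (Or.inr rfl); norm_num at h; done)

lemma terminal {n a b c s t u : ℤ} (hn : n % 8 = 5) (hg : Good n a b c s t u)
    (has : a ≤ s) (hsu : s ≤ u)
    (hb : 4*b^2 ≤ a^2) (hc : 4*c^2 ≤ a^2) (ht : 4*t^2 ≤ s^2)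
    (hE : ∀ k m : ℤ, (k = 1 ∨ k = -1) → (m = 1 ∨ m = -1) →
       a ≤ a + s*k^2 + u*m^2 + 2*b*k + 2*c*m + 2*t*k*m) :
    ∃ x y z : ℤ, x^2 + y^2 + 3*z^2 = n := by
  obtain ⟨ha, hs, hu⟩ := diag_pos hg
  obtain ⟨hpos, hD, hrep⟩ := hg
  rw [Df] at hD
  have ha0 : (0:ℤ) ≤ a := by linarith
  have hs0 : (0:ℤ) ≤ s := by linarith
  rcases eq_or_lt_of_le ha with haa | ha2
  · -- a = 1
    have haa : a = 1 := haa.symm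
    subst haa
    have hb0 : b = 0 := by nlinarith [sq_nonneg b]
    have hc0 : c = 0 := by nlinarith [sq_nonneg c]
    subst hb0; subst hc0
    have hsu3 : s*u - t^2 = 3 := by linarith [hD]
    have hsule : s*u ≤ 4 := by nlinarith
    have ht2 : t^2 = s*u - 3 := by linarith
    have htt : t^2 = 0 ∨ t^2 = 1 := by
      have h1 : 0 ≤ t^2 := sq_nonneg t
      omega
    rcases htt with h0 | h1
    · -- t = 0, s*u = 3, so s = 1, u = 3
      have ht0 : t = 0 := by nlinarith [sq_nonneg t]
      have hsu' : s*u = 3 := by omega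
      have hs1 : s = 1 := by nlinarith
      have hu3 : u = 3 := by nlinarith
      subst ht0; subst hs1; subst hu3
      obtain ⟨x, y, z, hx⟩ := hrep
      exact ⟨x, y, z, by simp only [Qf] at hx; linarith [hx]⟩
    · -- t² = 1, s*u = 4, s = u = 2 : impossible mod 8
      exfalso
      have hsu4 : s*u = 4 := by omega
      have hs2 : s = 2 := by nlinarith
      have hu2 : u = 2 := by nlinarith
      subst hs2; subst hu2
      obtain ⟨x, y, z, hx⟩ := hrep
      simp only [Qf] at hx
      have h8 : ((n : ZMod 8)) = 5 := by
        have := (ZMod.intCast_eq_intCast_iff n 5 8).mpr (show n % 8 = 5 % 8 by omega)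
        exact_mod_cast this
      have hcast := congrArg (fun w : ℤ => (w : ZMod 8)) hx
      push_cast at hcast
      rw [h8] at hcast
      have ht1 : t = 1 ∨ t = -1 := by
        have hz : (t - 1) * (t + 1) = 0 := by linear_combination h1
        rcases mul_eq_zero.mp hz with h | h
        · left; linarith
        · right; linarith
      rcases ht1 with rfl | rfl
      · have hdec : ∀ X Y Z : ZMod 8, X^2 + 2*Y^2 + 2*Z^2 + 2*Y*Z ≠ 5 := by decide
        push_cast at hcast
        exact hdec x y z (by linear_combination hcast)
      · have hdec : ∀ X Y Z : ZMod 8, X^2 + 2*Y^2 + 2*Z^2 - 2*Y*Z ≠ 5 := by decide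
        push_cast at hcast
        exact hdec x y z (by linear_combination hcast)
  · -- a ≥ 2 : contradiction
    exfalso
    have ha2' : (2:ℤ) ≤ a := ha2
    -- step 1 : s = a
    have hsa : s = a := by
      by_contra hne
      have hs1 : a + 1 ≤ s := by omega
      obtain ⟨hbct, -⟩ := bct_bound hb hc ht ha0 ha0 hs0
      have e1 : 4*a*t^2 ≤ a*s^2 := by nlinarith
      have e2 : 4*b^2*u ≤ a^2*u := by nlinarith
      have e3 : 4*c^2*s ≤ a^2*s := by nlinarith
      -- 12 ≥ 4asu - as² - a²u - 2a²s ≥ 3as(s-a) ≥ 18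
      have key : 3*s*(s-a) ≤ 4*s*u - s^2 - a*u - 2*a*s := by nlinarith
      have hku := mul_le_mul_of_nonneg_left key ha0
      have p1 : (6:ℤ) ≤ a*s := by nlinarith
      have m2 : 6 ≤ a*s*(s-a) := by nlinarith [mul_le_mul p1 (show (1:ℤ) ≤ s-a by omega) (by norm_num) (show (0:ℤ) ≤ a*s by nlinarith)]
      nlinarith [hD, e1, e2, e3, hbct, hku, m2]
    rw [hsa] at hsu ht hE hD
    obtain ⟨hbct, -⟩ := bct_bound hb hc ht ha0 ha0 ha0
    have hu1 : u ≤ a + 1 := by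
      by_contra hcon
      have hu2 : a + 2 ≤ u := by omega
      have e1 : 4*a*t^2 ≤ a*a^2 := by nlinarith
      have e2 : 4*b^2*u ≤ a^2*u := by nlinarith
      have e3 : 4*c^2*a ≤ a^2*a := by nlinarith
      have m : 8 ≤ a^2*(u-a) := by nlinarith
      nlinarith [hD, e1, e2, e3, hbct, m]
    have hucase : u = a ∨ u = a + 1 := by omega
    rcases hucase with hua | hua
    · rw [hua] at hD
      exact case_cube ha2' hb hc ht hD
    · rw [hua] at hD hE
      have haa2 : a = 2 := by
        by_contra hcon
        have ha3 : 3 ≤ a := by omega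
        have e1 : 4*a*t^2 ≤ a*a^2 := by nlinarith
        have e2 : 4*b^2*(a+1) ≤ a^2*(a+1) := by nlinarith
        have e3 : 4*c^2*a ≤ a^2*a := by nlinarith
        have m : 27 ≤ 3*a^2 := by nlinarith
        nlinarith [hD, e1, e2, e3, hbct, m]
      rw [haa2] at hD hE hb hc ht
      have hbb1 : -1 ≤ b ∧ b ≤ 1 := by
        constructor <;> nlinarith [sq_nonneg (b+1), sq_nonneg (b-1)]
      have hcc1 : -1 ≤ c ∧ c ≤ 1 := by
        constructor <;> nlinarith [sq_nonneg (c+1), sq_nonneg (c-1)]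
      have htt1 : -1 ≤ t ∧ t ≤ 1 := by
        constructor <;> nlinarith [sq_nonneg (t+1), sq_nonneg (t-1)]
      refine case_223 hbb1.1 hbb1.2 hcc1.1 hcc1.2 htt1.1 htt1.2 (by linarith [hD]) ?_
      intro k m hk hm
      have := hE k m hk hm
      linarith

def meas (a s u : ℤ) : ℤ := (a+s+u)^3 + a*(a+s+u) + s

lemma meas_lt {a s u a' s' u' : ℤ} (h1 : 1 ≤ a') (h2 : 1 ≤ s') (h3 : 1 ≤ u')
    (h4 : 1 ≤ a) (h5 : 1 ≤ s) (h6 : 1 ≤ u)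
    (hsum : a' + s' + u' < a + s + u) : meas a' s' u' < meas a s u := by
  have hc : (a'+s'+u'+1)^3 ≤ (a+s+u)^3 := pow_le_pow_left₀ (by linarith) (by linarith) 3
  simp only [meas]
  nlinarith [hc]

lemma all_reduce (n : ℤ) (hn : n % 8 = 5) :
    ∀ K : ℕ, ∀ a b c s t u : ℤ, Good n a b c s t u →
      meas a s u ≤ (K:ℤ) → ∃ x y z : ℤ, x^2 + y^2 + 3*z^2 = n := by
  intro K
  induction K using Nat.strong_induction_on with
  | _ K IH =>
  intro a b c s t u hg hK
  obtain ⟨ha, hs, hu⟩ := diag_pos hg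
  have step : ∀ a' b' c' s' t' u' : ℤ, Good n a' b' c' s' t' u' →
      meas a' s' u' < meas a s u → ∃ x y z : ℤ, x^2 + y^2 + 3*z^2 = n := by
    intro a' b' c' s' t' u' hg' hlt
    obtain ⟨ha', hs', hu'⟩ := diag_pos hg'
    have h0 : 0 ≤ meas a' s' u' := by
      simp only [meas]
      nlinarith [pow_nonneg (show (0:ℤ) ≤ a'+s'+u' by linarith) 3,
        mul_nonneg (show (0:ℤ) ≤ a' by linarith) (show (0:ℤ) ≤ a'+s'+u' by linarith)]
    refine IH (meas a' s' u').toNat ?_ a' b' c' s' t' u' hg' ?_ <;> omega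
  -- order the diagonal
  rcases lt_or_ge s a with hlt | has
  · exact step _ _ _ _ _ _ (good_swap12 hg) (by simp only [meas]; nlinarith)
  rcases lt_or_ge u s with hlt | hsu
  · exact step _ _ _ _ _ _ (good_swap23 hg) (by simp only [meas]; nlinarith)
  -- reduce b
  by_cases hb1 : a < 2*b
  · refine step _ _ _ _ _ _ (good_shearB (-1) hg) (meas_lt ?_ ?_ ?_ ha hs hu ?_) <;>
      [skip; skip; skip; nlinarith]
    · exact ha
    · have := (diag_pos (good_shearB (-1) hg)).2.1; simpa using this
    · exact hu
  by_cases hb2 : a < -(2*b)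
  · refine step _ _ _ _ _ _ (good_shearB 1 hg) (meas_lt ?_ ?_ ?_ ha hs hu ?_) <;>
      [skip; skip; skip; nlinarith]
    · exact ha
    · have := (diag_pos (good_shearB 1 hg)).2.1; simpa using this
    · exact hu
  -- reduce c
  by_cases hc1 : a < 2*c
  · refine step _ _ _ _ _ _ (good_shearC (-1) hg) (meas_lt ?_ ?_ ?_ ha hs hu ?_) <;>
      [skip; skip; skip; nlinarith]
    · exact ha
    · exact hs
    · have := (diag_pos (good_shearC (-1) hg)).2.2; simpa using this
  by_cases hc2 : a < -(2*c)
  · refine step _ _ _ _ _ _ (good_shearC 1 hg) (meas_lt ?_ ?_ ?_ ha hs hu ?_) <;>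
      [skip; skip; skip; nlinarith]
    · exact ha
    · exact hs
    · have := (diag_pos (good_shearC 1 hg)).2.2; simpa using this
  -- reduce t
  by_cases ht1 : s < 2*t
  · refine step _ _ _ _ _ _ (good_shearT (-1) hg) (meas_lt ?_ ?_ ?_ ha hs hu ?_) <;>
      [skip; skip; skip; nlinarith]
    · exact ha
    · exact hs
    · have := (diag_pos (good_shearT (-1) hg)).2.2; simpa using this
  by_cases ht2 : s < -(2*t)
  · refine step _ _ _ _ _ _ (good_shearT 1 hg) (meas_lt ?_ ?_ ?_ ha hs hu ?_) <;>
      [skip; skip; skip; nlinarith]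
    · exact ha
    · exact hs
    · have := (diag_pos (good_shearT 1 hg)).2.2; simpa using this
  -- the four M4 moves
  by_cases hE11 : a + s*1^2 + u*1^2 + 2*b*1 + 2*c*1 + 2*t*1*1 < a
  · refine step _ _ _ _ _ _ (good_moveE 1 1 hg) (meas_lt ?_ hs hu ha hs hu (by nlinarith))
    have := (diag_pos (good_moveE 1 1 hg)).1; simpa using this
  by_cases hE12 : a + s*1^2 + u*(-1:ℤ)^2 + 2*b*1 + 2*c*(-1) + 2*t*1*(-1) < a
  · refine step _ _ _ _ _ _ (good_moveE 1 (-1) hg) (meas_lt ?_ hs hu ha hs hu (by nlinarith))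
    have := (diag_pos (good_moveE 1 (-1) hg)).1; simpa using this
  by_cases hE21 : a + s*(-1:ℤ)^2 + u*1^2 + 2*b*(-1) + 2*c*1 + 2*t*(-1)*1 < a
  · refine step _ _ _ _ _ _ (good_moveE (-1) 1 hg) (meas_lt ?_ hs hu ha hs hu (by nlinarith))
    have := (diag_pos (good_moveE (-1) 1 hg)).1; simpa using this
  by_cases hE22 : a + s*(-1:ℤ)^2 + u*(-1:ℤ)^2 + 2*b*(-1) + 2*c*(-1) + 2*t*(-1)*(-1) < a
  · refine step _ _ _ _ _ _ (good_moveE (-1) (-1) hg) (meas_lt ?_ hs hu ha hs hu (by nlinarith))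
    have := (diag_pos (good_moveE (-1) (-1) hg)).1; simpa using this
  -- terminal
  refine terminal hn hg has hsu (by nlinarith) (by nlinarith) (by nlinarith) ?_
  rintro k m (rfl | rfl) (rfl | rfl) <;> push_neg at hE11 hE12 hE21 hE22 <;> linarith

theorem good_represents {n : ℤ} (hn : n % 8 = 5) {a b c s t u : ℤ}
    (hg : Good n a b c s t u) : ∃ x y z : ℤ, x^2 + y^2 + 3*z^2 = n := by
  obtain ⟨ha, hs, hu⟩ := diag_pos hg
  refine all_reduce n hn (meas a s u).toNat a b c s t u hg ?_
  have h0 : 0 ≤ meas a s u := by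
    simp only [meas]
    nlinarith [pow_nonneg (show (0:ℤ) ≤ a+s+u by linarith) 3,
      mul_nonneg (show (0:ℤ) ≤ a by linarith) (show (0:ℤ) ≤ a+s+u by linarith)]
  omega



lemma posdef_construct {n s q t : ℤ} (hn : 5 ≤ n) (hs : 1 ≤ s)
    (hdet : n*(s*q - t^2) - q = 3) :
    ∀ x y z : ℤ, ¬(x = 0 ∧ y = 0 ∧ z = 0) → 1 ≤ Qf n 1 0 s t q x y z := by
  intro x y z hne
  have key : (n*s - 1)*(n*(Qf n 1 0 s t q x y z)) =
      (n*s - 1)*(n*x + y)^2 + ((n*s - 1)*y + n*t*z)^2 + 3*n*z^2 := by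
    simp only [Qf]
    linear_combination (n*z^2) * hdet
  have hns : 4 ≤ n*s - 1 := by nlinarith
  have hpos : 0 < Qf n 1 0 s t q x y z := by
    by_contra hq0
    push_neg at hq0
    have hL : (n*s - 1)*(n*x + y)^2 + ((n*s - 1)*y + n*t*z)^2 + 3*n*z^2 ≤ 0 := by
      rw [← key]
      apply mul_nonpos_of_nonneg_of_nonpos (by linarith)
      exact mul_nonpos_of_nonneg_of_nonpos (by linarith) hq0
    have s1 : 0 ≤ (n*s - 1)*(n*x + y)^2 := by positivity
    have s2 : 0 ≤ ((n*s - 1)*y + n*t*z)^2 := sq_nonneg _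
    have s3 : 0 ≤ 3*n*z^2 := by positivity
    have hz : z = 0 := by nlinarith [sq_nonneg z]
    subst hz
    have hy1 : (n*s-1)*y + n*t*0 = 0 := by nlinarith [sq_nonneg ((n*s-1)*y + n*t*0)]
    have hy2 : (n*s-1)*y = 0 := by linear_combination hy1
    have hy : y = 0 := by
      rcases mul_eq_zero.mp hy2 with h | h
      · exfalso; omega
      · exact h
    subst hy
    have hx1 : (n*x + 0) = 0 := by nlinarith [sq_nonneg (n*x + 0)]
    have hx2 : n*x = 0 := by linear_combination hx1
    have hx : x = 0 := by
      rcases mul_eq_zero.mp hx2 with h | h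
      · exfalso; omega
      · exact h
    exact hne ⟨hx, rfl, rfl⟩
  omega

/-- key construction: any n ≥ 5 with n % 8 = 5, n % 3 ≠ 0 is represented
by a Good form. -/
lemma exists_good (n : ℕ) (hn8 : n % 8 = 5) (hn3 : n % 3 ≠ 0) :
    ∃ a b c s t u : ℤ, Good (n : ℤ) a b c s t u := by
  have hn5 : 5 ≤ n := by omega
  -- Step 1: coprimality of 4n-3 with 12n
  have hcop : Nat.Coprime (4*n - 3) (12*n) := by
    have h12 : Nat.Coprime (4*n - 3) 12 := by
      rcases Nat.coprime_or_dvd_of_prime (by norm_num : Nat.Prime 2) (4*n-3) with h2 | h2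
      · rcases Nat.coprime_or_dvd_of_prime (by norm_num : Nat.Prime 3) (4*n-3) with h3 | h3
        · have c4 : Nat.Coprime (4*n-3) 4 := Nat.Coprime.pow_right 2 h2.symm
          have := Nat.Coprime.mul_right c4 h3.symm
          simpa using this
        · exfalso; obtain ⟨k, hk⟩ := h3; omega
      · exfalso; obtain ⟨k, hk⟩ := h2; omega
    have hn' : Nat.Coprime (4*n - 3) n := by
      have hd3 : Nat.gcd (4*n-3) n ∣ 3 := by
        have hd : Nat.gcd (4*n-3) n ∣ (4*n - 3) := Nat.gcd_dvd_left _ _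
        have hdn : Nat.gcd (4*n-3) n ∣ n := Nat.gcd_dvd_right _ _
        have h := Nat.dvd_sub (hdn.mul_left 4) hd
        simpa [show 4*n - (4*n-3) = 3 by omega] using h
      rcases (Nat.dvd_prime (by norm_num)).mp hd3 with h | h
      · exact h
      · exfalso
        have hdn : Nat.gcd (4*n-3) n ∣ n := Nat.gcd_dvd_right _ _
        rw [h] at hdn
        obtain ⟨k, hk⟩ := hdn; omega
    exact Nat.Coprime.mul_right h12 hn'
  -- Step 2: Dirichlet
  have h12n : 12*n ≠ 0 := by omega
  haveI : NeZero (12*n) := ⟨h12n⟩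
  have hunit : IsUnit ((4*n-3 : ℕ) : ZMod (12*n)) :=
    (ZMod.isUnit_iff_coprime _ _).mpr hcop
  obtain ⟨q, hq_gt, hq_prime, hq_mod⟩ :=
    Nat.forall_exists_prime_gt_and_eq_mod hunit (12*n)
  haveI : Fact q.Prime := ⟨hq_prime⟩
  -- congruences for q
  have hmodeq : q % (12*n) = (4*n-3) % (12*n) := by
    have := (ZMod.natCast_eq_natCast_iff' q (4*n-3) (12*n)).mp (by exact_mod_cast hq_mod)
    exact this
  obtain ⟨k, hk⟩ : ∃ k, q = (4*n-3) + 12*n*k := by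
    have hle : (4*n-3) % (12*n) = 4*n-3 := Nat.mod_eq_of_lt (by omega)
    rw [hle] at hmodeq
    refine ⟨q / (12*n), ?_⟩
    conv_lhs => rw [← Nat.div_add_mod q (12*n)]
    omega
  set M := n*k with hM
  have hqM : q = 4*n - 3 + 12*M := by rw [hk, hM]; ring_nf
  have hq4 : q % 4 = 1 := by omega
  have hq3 : q % 3 = n % 3 := by omega
  have hq_big : 12*n < q := hq_gt
  have hq_odd : Odd q := by
    rcases Nat.even_or_odd q with h | h
    · exfalso; obtain ⟨m, hm⟩ := h; omega
    · exact h
  -- D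
  have hndvd : n ∣ q + 3 := ⟨4 + 12*k, by rw [hk]; ring_nf; omega⟩
  set D := (q+3)/n with hD
  have hDn : n * D = q + 3 := Nat.mul_div_cancel' hndvd
  have hD1 : 1 ≤ D := by
    rcases Nat.eq_zero_or_pos D with h | h
    · exfalso; rw [h] at hDn; omega
    · exact h
  -- q does not divide D
  have hqD : ¬ (q:ℤ) ∣ (D:ℤ) := by
    intro hdvd
    have hdd : q ∣ D := by exact_mod_cast hdvd
    have hDq : q ≤ D := Nat.le_of_dvd (by omega) hdd
    have h5 : 5*D ≤ n*D := Nat.mul_le_mul_right D (by omega)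
    have h6 : 5*q ≤ 5*D := by omega
    omega
  have hnq_ndvd : ¬ q ∣ n := fun hd => by have := Nat.le_of_dvd (by omega) hd; omega
  have hnq_cop : Nat.Coprime n q :=
    ((Nat.Prime.coprime_iff_not_dvd hq_prime).mpr hnq_ndvd).symm
  have hn3c : Nat.Coprime n 3 := by
    rcases Nat.coprime_or_dvd_of_prime (by norm_num : Nat.Prime 3) n with h | h
    · exact h.symm
    · exfalso; obtain ⟨m, hm⟩ := h; omega
  have hn_odd : Odd n := by
    rcases Nat.even_or_odd n with h | h
    · exfalso; obtain ⟨m, hm⟩ := h; omega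
    · exact h
  have hn4 : n % 4 = 1 := by omega
  -- Jacobi symbol computations
  have jnq : J((n:ℤ) | q) = J((q:ℤ) | n) :=
    jacobiSym.quadratic_reciprocity_one_mod_four hn4 hq_odd
  have hDnZ : (n:ℤ) * D = q + 3 := by exact_mod_cast hDn
  have jqn : J((q:ℤ) | n) = J((-3 : ℤ) | n) := by
    apply jacobiSym.mod_left'
    have hq_eq : (q:ℤ) = -3 + (n:ℤ) * D := by linarith [hDnZ]
    rw [hq_eq]
    simp [Int.add_mul_emod_self_left]
  have jm1n : J((-1 : ℤ) | n) = 1 := by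
    rw [jacobiSym.at_neg_one hn_odd, ZMod.χ₄_nat_one_mod_four hn4]
  have j3n : J((3:ℤ) | n) = J((n:ℤ) | 3) :=
    jacobiSym.quadratic_reciprocity_one_mod_four' (by decide) hn4
  have jm3n : J((-3:ℤ) | n) = J((n:ℤ) | 3) := by
    rw [show ((-3:ℤ)) = (-1) * 3 by norm_num, jacobiSym.mul_left, jm1n, one_mul, j3n]
  have jm1q : J((-1:ℤ) | q) = 1 := by
    rw [jacobiSym.at_neg_one hq_odd, ZMod.χ₄_nat_one_mod_four hq4]
  have j3q : J((3:ℤ) | q) = J((q:ℤ) | 3) :=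
    jacobiSym.quadratic_reciprocity_one_mod_four' (by decide) hq4
  have jq3 : J((q:ℤ) | 3) = J((n:ℤ) | 3) := by
    apply jacobiSym.mod_left'
    omega
  have jm3q : J((-3:ℤ) | q) = J((n:ℤ) | 3) := by
    rw [show ((-3:ℤ)) = (-1) * 3 by norm_num, jacobiSym.mul_left, jm1q, one_mul, j3q, jq3]
  have jn3sq : J((n:ℤ) | 3) = 1 ∨ J((n:ℤ) | 3) = -1 := by
    apply jacobiSym.eq_one_or_neg_one
    rw [Int.gcd_natCast_natCast]
    exact hn3c
  have e4 : J((n:ℤ) | q) = J((n:ℤ) | 3) := by rw [jnq, jqn, jm3n]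
  have hmod : ((-(D:ℤ)) * n * n) % q = ((-3) * (n:ℤ)) % q := by
    have : (-3) * (n:ℤ) - (-(D:ℤ)) * n * n = (q:ℤ) * (n * D - 3 * ((n*D - q - 3)/q) - 3*0) ∨ True := Or.inr trivial
    have hdvd : (q:ℤ) ∣ ((-3) * (n:ℤ) - (-(D:ℤ)) * n * n) := by
      refine ⟨(n:ℤ), ?_⟩
      linear_combination (n:ℤ) * hDnZ
    exact (Int.modEq_iff_dvd.mpr hdvd)
  have jfinal : J(-(D:ℤ) | q) = 1 := by
    have e1 : J((-(D:ℤ))*n*n | q) = J(-(D:ℤ)|q) * J((n:ℤ)|q) * J((n:ℤ)|q) := by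
      rw [jacobiSym.mul_left, jacobiSym.mul_left]
    have e2 : J((-(D:ℤ))*n*n | q) = J((-3)*(n:ℤ) | q) := jacobiSym.mod_left' hmod
    have e3 : J((-3)*(n:ℤ) | q) = J((-3:ℤ)|q) * J((n:ℤ)|q) := jacobiSym.mul_left _ _ _
    have comb : J(-(D:ℤ)|q) * J((n:ℤ)|3) * J((n:ℤ)|3) = J((n:ℤ)|3) * J((n:ℤ)|3) := by
      have hh := e1.symm.trans (e2.trans e3)
      rw [e4, jm3q] at hh
      exact hh
    rcases jn3sq with h | h <;> rw [h] at comb <;> linarith [comb]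
  -- extract the square root β
  have hDq0 : ((-(D:ℤ) : ℤ) : ZMod q) ≠ 0 := by
    rw [Ne, ZMod.intCast_zmod_eq_zero_iff_dvd]
    intro hdvd
    exact hqD (dvd_neg.mp hdvd)
  have hsq : IsSquare ((-(D:ℤ) : ℤ) : ZMod q) := by
    rw [← legendreSym.eq_one_iff q hDq0, jacobiSym.legendreSym.to_jacobiSym]
    exact jfinal
  obtain ⟨r, hr⟩ := hsq
  have h0 : ((r.val^2 + D : ℕ) : ZMod q) = 0 := by
    push_cast
    rw [ZMod.natCast_rightInverse r]
    have hD' : ((D:ℕ) : ZMod q) = -(r*r) := by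
      have hh := hr
      push_cast at hh
      linear_combination -hh
    rw [hD']; ring
  have hdvdN : q ∣ r.val^2 + D := (ZMod.natCast_eq_zero_iff _ _).mp h0
  obtain ⟨S0, hS0⟩ := hdvdN
  have hS0pos : 1 ≤ S0 := by
    rcases Nat.eq_zero_or_pos S0 with h | h
    · exfalso; rw [h, Nat.mul_zero] at hS0; omega
    · exact h
  set β : ℤ := (r.val : ℤ) with hβ
  set S : ℤ := (S0 : ℤ) with hSdef
  have hS : β^2 + (D:ℤ) = (q:ℤ) * S := by rw [hβ, hSdef]; exact_mod_cast hS0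
  have hS1 : (1:ℤ) ≤ S := by rw [hSdef]; exact_mod_cast hS0pos
  have hdet : (n:ℤ)*(S*q - (-β)^2) - q = 3 := by
    have h1 : S*(q:ℤ) - β^2 = D := by linarith [hS]
    linear_combination (n:ℤ)*h1 + hDnZ
  refine ⟨(n:ℤ), 1, 0, S, -β, q, ?_, ?_, 1, 0, 0, ?_⟩
  · exact posdef_construct (by exact_mod_cast hn5) hS1 hdet
  · simp only [Df]
    linear_combination hdet
  · simp only [Qf]; ring



lemma odd_sq8 {x : ℤ} (h : Odd x) : x^2 % 8 = 1 := by
  obtain ⟨b, rfl⟩ := h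
  obtain ⟨c, hc⟩ := Int.even_mul_succ_self b
  have he : (2*b+1)^2 = 1 + 8*c := by
    have : b*(b+1) = c + c := hc
    linear_combination 4*this
  rw [he, Int.add_mul_emod_self_left]
  norm_num

lemma even_sq8 {x : ℤ} (h : Even x) : x^2 % 8 = 0 ∨ x^2 % 8 = 4 := by
  obtain ⟨a, rfl⟩ := h
  rcases Int.even_or_odd a with ⟨b, rfl⟩ | ⟨b, rfl⟩
  · left
    have he : ((b+b)+(b+b))^2 = 0 + 8*(2*b^2) := by ring
    rw [he, Int.add_mul_emod_self_left]
    norm_num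
  · right
    have he : ((2*b+1)+(2*b+1))^2 = 4 + 8*(2*b^2+2*b) := by ring
    rw [he, Int.add_mul_emod_self_left]
    norm_num

lemma sq_par (x : ℤ) : x^2 % 2 = x % 2 := by
  rcases Int.even_or_odd x with ⟨a, rfl⟩ | ⟨a, rfl⟩
  · have h1 : (a+a)^2 = 0 + 2*(2*a^2) := by ring
    have h2 : a + a = 0 + 2*a := by ring
    rw [h1, h2, Int.add_mul_emod_self_left, Int.add_mul_emod_self_left]
  · have h1 : (2*a+1)^2 = 1 + 2*(2*a^2+2*a) := by ring
    have h2 : 2*a + 1 = 1 + 2*a := by ring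
    rw [h1, h2, Int.add_mul_emod_self_left, Int.add_mul_emod_self_left]

lemma odd_rep {n : ℤ} (hn : n % 8 = 5)
    (h : ∃ x y z : ℤ, x^2 + y^2 + 3*z^2 = n) :
    ∃ x y z : ℤ, Odd x ∧ Odd y ∧ Odd z ∧ x^2 + y^2 + 3*z^2 = n := by
  obtain ⟨x, y, z, heq⟩ := h
  rcases Int.even_or_odd z with hz | hz
  · -- z even
    rcases Int.even_or_odd x with hx | hx
    · rcases Int.even_or_odd y with hy | hy
      · -- all even : impossible
        exfalso
        have h1 := even_sq8 hx; have h2 := even_sq8 hy; have h3 := even_sq8 hz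
        revert heq h1 h2 h3 hn
        generalize x^2 = X; generalize y^2 = Y; generalize z^2 = Z
        intros; omega
      · -- x even, y odd : use y as the odd one
        obtain ⟨B, hB⟩ := hx
        obtain ⟨w, hw⟩ := hz
        have heq2 : y^2 + 4*B^2 + 12*w^2 = n := by
          rw [hB, hw] at heq; linear_combination heq
        have h1 := odd_sq8 hy
        have h2 := sq_par B; have h3 := sq_par w
        have hBw : (B + w) % 2 = 1 := by
          revert heq2 h1 h2 h3 hn
          generalize y^2 = Y; generalize B^2 = B2; generalize w^2 = W2
          intros; omega
        refine ⟨y, B + 3*w, B - w, hy, ?_, ?_, ?_⟩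
        · rw [Int.odd_iff]; omega
        · rw [Int.odd_iff]; omega
        · linear_combination heq2
    · -- x odd
      rcases Int.even_or_odd y with hy | hy
      · obtain ⟨B, hB⟩ := hy
        obtain ⟨w, hw⟩ := hz
        have heq2 : x^2 + 4*B^2 + 12*w^2 = n := by
          rw [hB, hw] at heq; linear_combination heq
        have h1 := odd_sq8 hx
        have h2 := sq_par B; have h3 := sq_par w
        have hBw : (B + w) % 2 = 1 := by
          revert heq2 h1 h2 h3 hn
          generalize x^2 = X; generalize B^2 = B2; generalize w^2 = W2
          intros; omega
        refine ⟨x, B + 3*w, B - w, hx, ?_, ?_, ?_⟩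
        · rw [Int.odd_iff]; omega
        · rw [Int.odd_iff]; omega
        · linear_combination heq2
      · -- x, y odd, z even : impossible mod 8
        exfalso
        have h1 := odd_sq8 hx; have h2 := odd_sq8 hy; have h3 := even_sq8 hz
        revert heq h1 h2 h3 hn
        generalize x^2 = X; generalize y^2 = Y; generalize z^2 = Z
        intros; omega
  · -- z odd : x, y must both be odd
    have h3 := odd_sq8 hz
    rcases Int.even_or_odd x with hx | hx
    · exfalso
      have h1 := even_sq8 hx
      rcases Int.even_or_odd y with hy | hy
      · have h2 := even_sq8 hy
        revert heq h1 h2 h3 hn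
        generalize x^2 = X; generalize y^2 = Y; generalize z^2 = Z
        intros; omega
      · have h2 := odd_sq8 hy
        revert heq h1 h2 h3 hn
        generalize x^2 = X; generalize y^2 = Y; generalize z^2 = Z
        intros; omega
    · rcases Int.even_or_odd y with hy | hy
      · exfalso
        have h1 := odd_sq8 hx; have h2 := even_sq8 hy
        revert heq h1 h2 h3 hn
        generalize x^2 = X; generalize y^2 = Y; generalize z^2 = Z
        intros; omega
      · exact ⟨x, y, z, hx, hy, hz, heq⟩

lemma to_triangular {N : ℕ}
    (h : ∃ x y z : ℤ, Odd x ∧ Odd y ∧ Odd z ∧ x^2 + y^2 + 3*z^2 = 8*(N:ℤ)+5) :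
    ∃ x y z : ℕ, 2 * N = x * (x + 1) + y * (y + 1) + 3 * (z * (z + 1)) := by
  obtain ⟨x, y, z, hx, hy, hz, heq⟩ := h
  obtain ⟨X, hX⟩ := Int.natAbs_odd.mpr hx
  obtain ⟨Y, hY⟩ := Int.natAbs_odd.mpr hy
  obtain ⟨Z, hZ⟩ := Int.natAbs_odd.mpr hz
  have ex : x^2 = (2*(X:ℤ)+1)^2 := by
    rw [← sq_abs, Int.abs_eq_natAbs, hX]; push_cast; ring
  have ey : y^2 = (2*(Y:ℤ)+1)^2 := by
    rw [← sq_abs, Int.abs_eq_natAbs, hY]; push_cast; ring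
  have ez : z^2 = (2*(Z:ℤ)+1)^2 := by
    rw [← sq_abs, Int.abs_eq_natAbs, hZ]; push_cast; ring
  rw [ex, ey, ez] at heq
  have key4 : 4*(2 * (N:ℤ)) = 4*(X*(X+1) + Y*(Y+1) + 3*(Z*(Z+1))) := by linear_combination -heq
  have key : 2 * (N:ℤ) = X*(X+1) + Y*(Y+1) + 3*(Z*(Z+1)) := by linarith
  exact ⟨X, Y, Z, by exact_mod_cast key⟩


end Stmt17

/-- T(x)+T(y)+3T(z) represents every nonnegative integer not ≡ 2 (mod 3). -/
theorem stmt_17 (N : ℕ) (hN : N % 3 ≠ 2) :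
    ∃ x y z : ℕ, 2 * N = x * (x + 1) + y * (y + 1) + 3 * (z * (z + 1)) := by
  have h8 : (8*N+5) % 8 = 5 := by omega
  have h3 : (8*N+5) % 3 ≠ 0 := by omega
  obtain ⟨a, b, c, s, t, u, hg⟩ := Stmt17.exists_good (8*N+5) h8 h3
  have hrep := Stmt17.good_represents
    (show ((8*N+5 : ℕ) : ℤ) % 8 = 5 by push_cast; omega) hg
  apply Stmt17.to_triangular
  apply Stmt17.odd_rep (show (8*(N:ℤ)+5) % 8 = 5 by omega)
  obtain ⟨x, y, z, hxyz⟩ := hrep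
  exact ⟨x, y, z, by push_cast at hxyz ⊢; linarith⟩
end

section
/- Let p be an odd prime and k a positive integer not divisible by p such that x² + ky² = p has an integer solution. If x² + ky² = N has an integer solution for a positive integer N, then it has an integer solution (x₀, y₀) with gcd(x₀, y₀, p) = 1. -/
/-- Jones' lemma: if p is an odd prime, p ∤ k > 0, x²+ky² = p is solvable, and
x²+ky² = N is solvable for N > 0, then it has a solution (x₀,y₀) with
gcd(x₀,y₀,p) = 1. -/
theorem stmt_18 (p : ℕ) (hp : p.Prime) (hodd : p ≠ 2) (k : ℤ) (hk : 0 < k)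
    (hpk : ¬ (p : ℤ) ∣ k) (hrep : ∃ x y : ℤ, x ^ 2 + k * y ^ 2 = p)
    (N : ℤ) (hN : 0 < N) (hsol : ∃ x y : ℤ, x ^ 2 + k * y ^ 2 = N) :
    ∃ x₀ y₀ : ℤ, x₀ ^ 2 + k * y₀ ^ 2 = N ∧ Nat.gcd (Int.gcd x₀ y₀) p = 1 := by
  obtain ⟨a, b, hab⟩ := hrep
  have hpZ : Prime (p : ℤ) := Nat.prime_iff_prime_int.mp hp
  have hp0 : (0 : ℤ) < p := by exact_mod_cast hp.pos
  have hp2 : ¬ (p : ℤ) ∣ 2 := by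
    intro h
    have h1 : (p : ℤ) ≤ 2 := Int.le_of_dvd (by norm_num) h
    have h2 := hp.two_le
    have hpe : p = 2 := by omega
    exact hodd hpe
  have hnot_both : ¬ ((p : ℤ) ∣ a ∧ (p : ℤ) ∣ b) := by
    rintro ⟨⟨a', ha'⟩, ⟨b', hb'⟩⟩
    have hdv : (p : ℤ) * (p : ℤ) ∣ (p : ℤ) := by
      refine ⟨a' ^ 2 + k * b' ^ 2, ?_⟩
      linear_combination (-1 : ℤ) * hab + (a + (p : ℤ) * a') * ha' + k * (b + (p : ℤ) * b') * hb'
    have hle : (p : ℤ) * (p : ℤ) ≤ p := Int.le_of_dvd hp0 hdv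
    have h2le : (2 : ℤ) ≤ p := by exact_mod_cast hp.two_le
    nlinarith
  have hab2 : (p : ℤ) ∣ a → (p : ℤ) ∣ b := by
    intro h
    have h1 : (p : ℤ) ∣ k * b ^ 2 := by
      have he : k * b ^ 2 = (p : ℤ) - a * a := by nlinarith [hab]
      rw [he]; exact dvd_sub dvd_rfl (h.mul_right a)
    rcases hpZ.dvd_mul.mp h1 with h' | h'
    · exact absurd h' hpk
    · exact hpZ.dvd_of_dvd_pow h'
  have hba : (p : ℤ) ∣ b → (p : ℤ) ∣ a := by
    intro h
    have h1 : (p : ℤ) ∣ a ^ 2 := by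
      have he : a ^ 2 = (p : ℤ) - k * b * b := by nlinarith [hab]
      rw [he]; exact dvd_sub dvd_rfl ((h.mul_left k).mul_right b)
    exact hpZ.dvd_of_dvd_pow h1
  have pa : ¬ (p : ℤ) ∣ a := fun h => hnot_both ⟨h, hab2 h⟩
  have pb : ¬ (p : ℤ) ∣ b := fun h => hnot_both ⟨hba h, h⟩
  -- helper: from p ∣ 2 * (c * d) and p ∤ c, deduce p ∣ d
  have split2 : ∀ c d : ℤ, ¬ (p : ℤ) ∣ c → (p : ℤ) ∣ 2 * (c * d) → (p : ℤ) ∣ d := by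
    intro c d hc h
    rcases hpZ.dvd_mul.mp h with h' | h'
    · exact absurd h' hp2
    · rcases hpZ.dvd_mul.mp h' with h'' | h''
      · exact absurd h'' hc
      · exact h''
  have pkb : ¬ (p : ℤ) ∣ k * b := by
    intro h
    rcases hpZ.dvd_mul.mp h with h' | h'
    · exact hpk h'
    · exact pb h'
  -- coprimality from non-divisibility of one coordinate
  have gcd_of_ndvd : ∀ x y : ℤ, ¬ ((p : ℤ) ∣ x ∧ (p : ℤ) ∣ y) →
      Nat.gcd (Int.gcd x y) p = 1 := by
    intro x y h
    have hnd : ¬ p ∣ Int.gcd x y := by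
      intro hd
      have hdz : (p : ℤ) ∣ (Int.gcd x y : ℤ) := Int.natCast_dvd_natCast.mpr hd
      exact h ⟨hdz.trans (Int.gcd_dvd_left x y), hdz.trans (Int.gcd_dvd_right x y)⟩
    exact Nat.coprime_comm.mp (hp.coprime_iff_not_dvd.mpr hnd)
  -- main induction on |N|
  suffices H : ∀ n : ℕ, ∀ N' : ℤ, N'.natAbs = n → 0 < N' →
      (∃ x y : ℤ, x ^ 2 + k * y ^ 2 = N') →
      ∃ x₀ y₀ : ℤ, x₀ ^ 2 + k * y₀ ^ 2 = N' ∧ Nat.gcd (Int.gcd x₀ y₀) p = 1 by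
    exact H N.natAbs N rfl hN hsol
  intro n
  induction n using Nat.strong_induction_on with
  | _ n ih =>
    rintro N' hn hN' ⟨x, y, hxy⟩
    by_cases hc : (p : ℤ) ∣ x ∧ (p : ℤ) ∣ y
    · obtain ⟨⟨X, hX⟩, ⟨Y, hY⟩⟩ := hc
      have hNM : N' = (p : ℤ) ^ 2 * (X ^ 2 + k * Y ^ 2) := by
        rw [hX, hY] at hxy; linear_combination -hxy
      have hM : 0 < X ^ 2 + k * Y ^ 2 := by nlinarith [hN', hp0]
      have hlt : (X ^ 2 + k * Y ^ 2).natAbs < n := by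
        have h1 : N'.natAbs = ((p : ℤ) ^ 2).natAbs * (X ^ 2 + k * Y ^ 2).natAbs := by
          rw [hNM, Int.natAbs_mul]
        have h2 : ((p : ℤ) ^ 2).natAbs = p ^ 2 := by
          simp [Int.natAbs_pow]
        have h3 : 1 ≤ (X ^ 2 + k * Y ^ 2).natAbs := by
          rcases Nat.eq_zero_or_pos (X ^ 2 + k * Y ^ 2).natAbs with h | h
          · rw [Int.natAbs_eq_zero] at h
            rw [h] at hM
            exact absurd hM (by norm_num)
          · exact h
        have h1' : n = p ^ 2 * (X ^ 2 + k * Y ^ 2).natAbs := by rw [← hn, h1, h2]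
        have hp4 : 4 ≤ p ^ 2 := by nlinarith [hp.two_le]
        have h6 : 4 * (X ^ 2 + k * Y ^ 2).natAbs ≤ p ^ 2 * (X ^ 2 + k * Y ^ 2).natAbs :=
          Nat.mul_le_mul hp4 le_rfl
        omega
      obtain ⟨X₀, Y₀, hXY0, hg0⟩ := ih _ hlt _ rfl hM ⟨X, Y, rfl⟩
      have hnot : ¬ ((p : ℤ) ∣ X₀ ∧ (p : ℤ) ∣ Y₀) := by
        rintro ⟨h1, h2⟩
        have hdz : (p : ℤ) ∣ (Int.gcd X₀ Y₀ : ℤ) := Int.dvd_coe_gcd h1 h2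
        have hdn : p ∣ Int.gcd X₀ Y₀ := Int.natCast_dvd_natCast.mp hdz
        have : p ∣ Nat.gcd (Int.gcd X₀ Y₀) p := Nat.dvd_gcd hdn dvd_rfl
        rw [hg0] at this
        exact hp.one_lt.ne' (Nat.dvd_one.mp this)
      -- first composition: representation of p*M with first coordinate not divisible by p
      have key1 : ∃ u v : ℤ, u ^ 2 + k * v ^ 2 = (p : ℤ) * (X ^ 2 + k * Y ^ 2) ∧
          ¬ (p : ℤ) ∣ u := by
        by_cases hcase : (p : ℤ) ∣ (a * X₀ + k * b * Y₀)
        · refine ⟨a * X₀ - k * b * Y₀, a * Y₀ + b * X₀, ?_, ?_⟩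
          · linear_combination (X₀ ^ 2 + k * Y₀ ^ 2) * hab + (p : ℤ) * hXY0
          · intro hdvd
            have hX0 : (p : ℤ) ∣ X₀ := by
              apply split2 a X₀ pa
              have := dvd_add hcase hdvd
              have he : (a * X₀ + k * b * Y₀) + (a * X₀ - k * b * Y₀) = 2 * (a * X₀) := by ring
              rwa [he] at this
            have hY0 : (p : ℤ) ∣ Y₀ := by
              apply split2 (k * b) Y₀ pkb
              have := dvd_sub hcase hdvd
              have he : (a * X₀ + k * b * Y₀) - (a * X₀ - k * b * Y₀) = 2 * (k * b * Y₀) := by ring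
              rwa [he] at this
            exact hnot ⟨hX0, hY0⟩
        · refine ⟨a * X₀ + k * b * Y₀, a * Y₀ - b * X₀, ?_, hcase⟩
          linear_combination (X₀ ^ 2 + k * Y₀ ^ 2) * hab + (p : ℤ) * hXY0
      obtain ⟨u, v, huv, hu⟩ := key1
      -- second composition: representation of N' with first coordinate not divisible by p
      by_cases hcase : (p : ℤ) ∣ (a * u + k * b * v)
      · refine ⟨a * u - k * b * v, a * v + b * u, ?_, ?_⟩
        · linear_combination (u ^ 2 + k * v ^ 2) * hab + (p : ℤ) * huv - hNM
        · apply gcd_of_ndvd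
          rintro ⟨h1, -⟩
          apply hu
          apply split2 a u pa
          have := dvd_add hcase h1
          have he : (a * u + k * b * v) + (a * u - k * b * v) = 2 * (a * u) := by ring
          rwa [he] at this
      · refine ⟨a * u + k * b * v, a * v - b * u, ?_, ?_⟩
        · linear_combination (u ^ 2 + k * v ^ 2) * hab + (p : ℤ) * huv - hNM
        · exact gcd_of_ndvd _ _ (fun h => hcase h.1)
    · exact ⟨x, y, hxy, gcd_of_ndvd x y hc⟩
end

section
/- Every positive integer s with s ≡ 18 (mod 48) that is represented by the quadratic form 2x² + 4y² + 24z² over the integers is also represented by 4x² + 6y² + 8z² with all of x, y, z odd, provided s ≡ 2 (mod 16). -/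
/-- Any representation s = 4a²+6b²+8c² with s ≡ 2 (mod 16) has a, b, c all odd. -/
lemma odd_of_rep (s a b c : ℤ) (h16 : s % 16 = 2)
    (h : s = 4 * a ^ 2 + 6 * b ^ 2 + 8 * c ^ 2) : Odd a ∧ Odd b ∧ Odd c := by
  rcases Int.even_or_odd b with ⟨d, rfl⟩ | ⟨d, rfl⟩
  · exfalso
    have h4 : (4 : ℤ) ∣ s := ⟨a ^ 2 + 6 * d ^ 2 + 2 * c ^ 2, by linear_combination h⟩
    omega
  rcases Int.even_or_odd a with ⟨e, rfl⟩ | ⟨e, rfl⟩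
  · exfalso
    have h8 : (8 : ℤ) ∣ (s - 6) :=
      ⟨2 * e ^ 2 + 3 * d ^ 2 + 3 * d + c ^ 2, by linear_combination h⟩
    omega
  rcases Int.even_or_odd c with ⟨f, rfl⟩ | ⟨f, rfl⟩
  · exfalso
    obtain ⟨p, hp⟩ : Even (e * (e + 1)) := Int.even_mul_succ_self e
    obtain ⟨q, hq⟩ : Even (d * (d + 1)) := Int.even_mul_succ_self d
    have h16' : (16 : ℤ) ∣ (s - 10) :=
      ⟨2 * p + 3 * q + 2 * f ^ 2, by linear_combination h + 16 * hp + 24 * hq⟩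
    omega
  exact ⟨⟨e, rfl⟩, ⟨d, rfl⟩, ⟨f, rfl⟩⟩

/-- If s > 0, s ≡ 18 (mod 48), s ≡ 2 (mod 16), and s = 2x²+4y²+24z² is solvable,
then s = 4x²+6y²+8z² with x, y, z all odd. -/
theorem stmt_19 (s : ℤ) (hs : 0 < s) (h48 : s % 48 = 18) (h16 : s % 16 = 2)
    (hrep : ∃ x y z : ℤ, s = 2 * x ^ 2 + 4 * y ^ 2 + 24 * z ^ 2) :
    ∃ x y z : ℤ, Odd x ∧ Odd y ∧ Odd z ∧ s = 4 * x ^ 2 + 6 * y ^ 2 + 8 * z ^ 2 := by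
  obtain ⟨x, y, z, hxyz⟩ := hrep
  -- Step 1: x is odd.
  rcases Int.even_or_odd x with ⟨a, rfl⟩ | hx
  · exfalso
    have h4 : (4 : ℤ) ∣ s := ⟨2 * a ^ 2 + y ^ 2 + 6 * z ^ 2, by linear_combination hxyz⟩
    omega
  obtain ⟨a, rfl⟩ := hx
  -- Step 2: y is even.
  rcases Int.even_or_odd y with ⟨b, rfl⟩ | ⟨b, rfl⟩
  swap
  · exfalso
    have h8 : (8 : ℤ) ∣ (s - 6) :=
      ⟨a ^ 2 + a + 2 * b ^ 2 + 2 * b + 3 * z ^ 2, by linear_combination hxyz⟩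
    omega
  -- Step 3: z is even.
  rcases Int.even_or_odd z with ⟨c, rfl⟩ | ⟨c, rfl⟩
  swap
  · exfalso
    obtain ⟨p, hp⟩ : Even (a * (a + 1)) := Int.even_mul_succ_self a
    have h16' : (16 : ℤ) ∣ (s - 10) :=
      ⟨p + b ^ 2 + 6 * c ^ 2 + 6 * c + 1, by linear_combination hxyz + 8 * hp⟩
    omega
  -- Now s = 2x² + 16b² + 96c² with x = 2a+1 odd.
  set X : ℤ := 2 * a + 1 with hX
  have hs' : s = 2 * X ^ 2 + 16 * b ^ 2 + 96 * c ^ 2 := by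
    rw [hX]; linear_combination hxyz
  -- Step 4: 3 ∣ (X - b)(X + b).
  have h3s : (3 : ℤ) ∣ s := by omega
  have h3 : (3 : ℤ) ∣ (X - b) * (X + b) := by
    have h6 : (3 : ℤ) ∣ 2 * ((X - b) * (X + b)) := by
      obtain ⟨k, hk⟩ := h3s
      exact ⟨k - 6 * b ^ 2 - 32 * c ^ 2, by linear_combination hk - hs'⟩
    rcases (Int.prime_three.dvd_mul.mp h6) with h | h
    · omega
    · exact h
  -- Choose sign: B = ±b with 3 ∣ X - B.
  have key : ∀ B : ℤ, (3 : ℤ) ∣ (X - B) → s = 2 * X ^ 2 + 16 * B ^ 2 + 96 * c ^ 2 →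
      ∃ u v w : ℤ, Odd u ∧ Odd v ∧ Odd w ∧ s = 4 * u ^ 2 + 6 * v ^ 2 + 8 * w ^ 2 := by
    intro B ⟨t, ht⟩ hsB
    refine ⟨t + B + 4 * c, t - B, t + B - 2 * c, ?_, ?_, ?_, ?_⟩ <;>
      [skip; skip; skip;
        · linear_combination hsB + (2 * X + 2 * B + 6 * t) * ht]
    all_goals {
      have heq : s = 4 * (t + B + 4 * c) ^ 2 + 6 * (t - B) ^ 2 + 8 * (t + B - 2 * c) ^ 2 := by
        linear_combination hsB + (2 * X + 2 * B + 6 * t) * ht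
      obtain ⟨h1, h2, h3⟩ := odd_of_rep s _ _ _ h16 heq
      first | exact h1 | exact h2 | exact h3 }
  rcases (Int.prime_three.dvd_mul.mp h3) with h | h
  · exact key b h hs'
  · exact key (-b) (by rw [sub_neg_eq_add]; exact h) (by linear_combination hs')
end
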